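/- Assume a random tournament T on n alternatives is generated by independently orienting each edge, with the edge from a_i to a_j (for i < j) present with probability p_{i,j} ∈ [f(n), 1 − f(n)], where f(n) ≤ 1/2 and f(n) ∈ ω(1/n). Then the probability that T is strongly connected (equivalently, that the top cycle TC(T) equals the whole set of alternatives) tends to 1 as n → ∞. -/

import Mathlib

/-- The set of (unordered) edges of a tournament on `n` alternatives, represented by the
ordered pairs `(i, j)` with `i < j`. -/
abbrev Edges (n : ℕ) := {q : Fin n × Fin n // q.1 < q.2}

/-- An orientation of all edges: `σ e = true` means the edge `e = (i, j)` (with `i < j`)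
is oriented from `a_i` to `a_j`. A tournament is exactly such an orientation. -/
abbrev Orient (n : ℕ) := Edges n → Bool

/-- `a_i` dominates `a_j` in the tournament given by the orientation `σ`. -/
def beats {n : ℕ} (σ : Orient n) (i j : Fin n) : Prop :=
  (∃ h : i < j, σ ⟨(i, j), h⟩ = true) ∨ (∃ h : j < i, σ ⟨(j, i), h⟩ = false)

/-- The probability of obtaining the particular tournament `σ` when each edge `(i, j)`
(`i < j`) is independently oriented from `a_i` to `a_j` with probability `p i j`. -/
noncomputable def prOf {n : ℕ} (p : Fin n → Fin n → ℝ) (σ : Orient n) : ℝ :=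
  ∏ e : Edges n, if σ e = true then p e.1.1 e.1.2 else 1 - p e.1.1 e.1.2

/-- The probability of the event `E` under the independent-edge random tournament model
with edge probabilities `p`. -/
noncomputable def Pr {n : ℕ} (p : Fin n → Fin n → ℝ) (E : Set (Orient n)) : ℝ :=
  ∑ σ : Orient n, E.indicator (prOf p) σ


namespace S8
open Finset

variable {V : Type*} [DecidableEq V]

/-- edges from `X` into `w` -/
def cnt (r : V → V → Bool) (X : Finset V) (w : V) : ℕ :=
  (X.filter (fun u => r u w = true)).card

/-- number of r-edges from `A \ S` into `S` -/
def lc (r : V → V → Bool) (A S : Finset V) : ℕ :=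
  ∑ w ∈ S, cnt r (A \ S) w

noncomputable def G (r : V → V → Bool) (A : Finset V) (k : ℕ) : ℝ :=
  ∑ S ∈ A.powersetCard k, ((49:ℝ)/64) ^ (lc r A S)

def Total (r : V → V → Bool) (A : Finset V) : Prop :=
  ∀ u ∈ A, ∀ v ∈ A, u ≠ v → r u v = !r v u

lemma G_nonneg (r : V → V → Bool) (A : Finset V) (k : ℕ) : 0 ≤ G r A k := by
  apply Finset.sum_nonneg
  intro S _
  positivity

lemma lc_flip (r : V → V → Bool) (A S : Finset V) (hS : S ⊆ A) :
    lc (fun u v => r v u) A (A \ S) = lc r A S := by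
  unfold lc cnt
  rw [Finset.sdiff_sdiff_eq_self hS]
  simp only [Finset.card_filter]
  exact Finset.sum_comm

lemma G_flip (r : V → V → Bool) (A : Finset V) (k : ℕ) (hk : k ≤ A.card) :
    G r A k = G (fun u v => r v u) A (A.card - k) := by
  unfold G
  refine Finset.sum_nbij' (fun S => A \ S) (fun T => A \ T) ?_ ?_ ?_ ?_ ?_
  · intro S hS
    rw [mem_powersetCard] at hS ⊢
    exact ⟨sdiff_subset, by rw [card_sdiff_of_subset hS.1, hS.2]⟩
  · intro T hT
    rw [mem_powersetCard] at hT ⊢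
    refine ⟨sdiff_subset, ?_⟩
    rw [card_sdiff_of_subset hT.1, hT.2]
    omega
  · intro S hS
    exact Finset.sdiff_sdiff_eq_self (mem_powersetCard.mp hS).1
  · intro T hT
    exact Finset.sdiff_sdiff_eq_self (mem_powersetCard.mp hT).1
  · intro S hS
    rw [lc_flip r A S (mem_powersetCard.mp hS).1]

end S8

namespace S8
open Finset

variable {V : Type*} [DecidableEq V]

lemma Total.subset {r : V → V → Bool} {A B : Finset V} (h : Total r A) (hBA : B ⊆ A) :
    Total r B := fun u hu v hv => h u (hBA hu) v (hBA hv)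

lemma Total.flip {r : V → V → Bool} {A : Finset V} (h : Total r A) :
    Total (fun u v => r v u) A := by
  intro u hu v hv huv
  have := h v hv u hu (Ne.symm huv)
  simp only [this, Bool.not_not]

lemma cnt_erase_eq (r : V → V → Bool) (A : Finset V) (v : V) :
    cnt r (A.erase v) v = ∑ u ∈ A, if u ≠ v ∧ r u v = true then 1 else 0 := by
  unfold cnt
  rw [← Finset.filter_ne' A v, Finset.filter_filter, Finset.card_filter]

lemma exists_big_indeg (r : V → V → Bool) (A : Finset V) (hr : Total r A)
    (hA : A.Nonempty) : ∃ v ∈ A, A.card ≤ 2 * cnt r (A.erase v) v + 1 := by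
  have hio : ∀ v ∈ A, cnt r (A.erase v) v + cnt (fun u w => r w u) (A.erase v) v
      = A.card - 1 := by
    intro v hv
    unfold cnt
    have hfe : (A.erase v).filter (fun u => r v u = true)
        = (A.erase v).filter (fun u => ¬ (r u v = true)) := by
      apply Finset.filter_congr
      intro u hu
      rw [Finset.mem_erase] at hu
      rw [hr u (hu.2) v hv hu.1]
      simp
    rw [hfe, Finset.card_filter_add_card_filter_not, Finset.card_erase_of_mem hv]
  have hswap : ∑ v ∈ A, cnt r (A.erase v) v = ∑ v ∈ A, cnt (fun u w => r w u) (A.erase v) v := by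
    simp only [cnt_erase_eq]
    rw [Finset.sum_comm]
    apply Finset.sum_congr rfl
    intro v _
    apply Finset.sum_congr rfl
    intro u _
    congr 1
    simp [ne_comm]
  have hsum : ∑ v ∈ A, (A.card - 1) ≤ ∑ v ∈ A, 2 * cnt r (A.erase v) v := by
    calc ∑ v ∈ A, (A.card - 1) = ∑ v ∈ A, (cnt r (A.erase v) v + cnt (fun u w => r w u) (A.erase v) v) :=
          Finset.sum_congr rfl (fun v hv => (hio v hv).symm)
      _ = ∑ v ∈ A, cnt r (A.erase v) v + ∑ v ∈ A, cnt (fun u w => r w u) (A.erase v) v := Finset.sum_add_distrib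
      _ = ∑ v ∈ A, 2 * cnt r (A.erase v) v := by
          rw [← hswap, ← Finset.sum_add_distrib]
          apply Finset.sum_congr rfl; intros; omega
      _ ≤ ∑ v ∈ A, 2 * cnt r (A.erase v) v := le_refl _
  obtain ⟨v, hv, hle⟩ := Finset.exists_le_of_sum_le hA hsum
  refine ⟨v, hv, ?_⟩
  have : 0 < A.card := Finset.card_pos.mpr hA
  omega

end S8

namespace S8
open Finset

variable {V : Type*} [DecidableEq V]

noncomputable def Tf (m k : ℕ) : ℝ :=
  if k = 0 then 1 else 8^k - 7 * 8^(k-1) * ((7:ℝ)/8)^(m+1-2*k)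

lemma Tf_le (m k : ℕ) : Tf m k ≤ 8^k := by
  unfold Tf
  split
  · rename_i h; subst h; norm_num
  · have : (0:ℝ) ≤ 7 * 8^(k-1) * ((7:ℝ)/8)^(m+1-2*k) := by positivity
    linarith

lemma key_split (r : V → V → Bool) (A : Finset V) (v : V) (hv : v ∈ A)
    (S' : Finset V) (hS' : S' ⊆ A.erase v) :
    lc r A (insert v S') = cnt r (A \ insert v S') v + lc r (A.erase v) S' := by
  have hvS' : v ∉ S' := fun h => (Finset.mem_erase.mp (hS' h)).1 rfl
  have hsd : A \ insert v S' = (A.erase v) \ S' := by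
    ext u
    simp only [Finset.mem_sdiff, Finset.mem_insert, Finset.mem_erase]
    constructor
    · rintro ⟨hu, hns⟩
      exact ⟨⟨fun h => hns (Or.inl h), hu⟩, fun h => hns (Or.inr h)⟩
    · rintro ⟨⟨hne, hu⟩, hns⟩
      exact ⟨hu, fun h => by rcases h with h | h; exact hne h; exact hns h⟩
  unfold lc
  rw [Finset.sum_insert hvS', hsd]

lemma cnt_le_of_insert (r : V → V → Bool) (A : Finset V) (v : V) (S' : Finset V)
    (hS' : S' ⊆ A.erase v) :
    cnt r (A.erase v) v ≤ cnt r (A \ insert v S') v + S'.card := by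
  have hsub : (A.erase v).filter (fun u => r u v = true) ⊆
      ((A \ insert v S').filter (fun u => r u v = true)) ∪ S' := by
    intro u hu
    rw [Finset.mem_filter, Finset.mem_erase] at hu
    by_cases huS : u ∈ S'
    · exact Finset.mem_union_right _ huS
    · apply Finset.mem_union_left
      rw [Finset.mem_filter, Finset.mem_sdiff, Finset.mem_insert]
      exact ⟨⟨hu.1.2, fun h => by rcases h with h | h; exact hu.1.1 h; exact huS h⟩, hu.2⟩
  calc cnt r (A.erase v) v ≤ (((A \ insert v S').filter (fun u => r u v = true)) ∪ S').card :=
        Finset.card_le_card hsub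
    _ ≤ cnt r (A \ insert v S') v + S'.card := Finset.card_union_le _ _

lemma y_eq : ((49:ℝ)/64) = ((7:ℝ)/8)^2 := by norm_num

lemma G_step (r : V → V → Bool) (A : Finset V) (m k : ℕ) (hA : A.card = m)
    (hk : 1 ≤ k) (hkm : 2*k ≤ m) (v : V) (hv : v ∈ A)
    (hd : m ≤ 2 * cnt r (A.erase v) v + 1) :
    G r A k ≤ ((7:ℝ)/8)^(m+1-2*k) * G r (A.erase v) (k-1) + G r (A.erase v) k := by
  set y : ℝ := (49:ℝ)/64 with hy
  have hy0 : (0:ℝ) ≤ y := by norm_num [hy]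
  have hy1 : y ≤ 1 := by norm_num [hy]
  unfold G
  rw [← Finset.sum_filter_add_sum_filter_not (A.powersetCard k) (fun S => v ∈ S)]
  gcongr ?_ + ?_
  · -- v ∈ S part
    have hbij : ∑ S ∈ (A.powersetCard k).filter (fun S => v ∈ S), y ^ lc r A S
        = ∑ S' ∈ (A.erase v).powersetCard (k-1), y ^ lc r A (insert v S') := by
      refine Finset.sum_nbij' (fun S => S.erase v) (fun S' => insert v S') ?_ ?_ ?_ ?_ ?_
      · intro S hS
        rw [Finset.mem_filter, Finset.mem_powersetCard] at hS
        rw [Finset.mem_powersetCard]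
        exact ⟨Finset.erase_subset_erase v hS.1.1,
          by rw [Finset.card_erase_of_mem hS.2, hS.1.2]⟩
      · intro S' hS'
        rw [Finset.mem_powersetCard] at hS'
        rw [Finset.mem_filter, Finset.mem_powersetCard]
        have hvS' : v ∉ S' := fun h => (Finset.mem_erase.mp (hS'.1 h)).1 rfl
        constructor
        · constructor
          · intro u hu
            rw [Finset.mem_insert] at hu
            rcases hu with rfl | hu
            · exact hv
            · exact Finset.mem_of_mem_erase (hS'.1 hu)
          · rw [Finset.card_insert_of_notMem hvS', hS'.2]; omega
        · exact Finset.mem_insert_self v S'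
      · intro S hS
        rw [Finset.mem_filter] at hS
        exact Finset.insert_erase hS.2
      · intro S' hS'
        rw [Finset.mem_powersetCard] at hS'
        have hvS' : v ∉ S' := fun h => (Finset.mem_erase.mp (hS'.1 h)).1 rfl
        exact Finset.erase_insert hvS'
      · intro S hS
        rw [Finset.mem_filter] at hS
        rw [Finset.insert_erase hS.2]
    rw [hbij, Finset.mul_sum]
    apply Finset.sum_le_sum
    intro S' hS'
    rw [Finset.mem_powersetCard] at hS'
    have hkey := key_split r A v hv S' hS'.1
    have hcle := cnt_le_of_insert r A v S' hS'.1
    set e := cnt r (A \ insert v S') v with he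
    have h2e : m + 1 - 2*k ≤ 2 * e := by
      have := hS'.2
      omega
    calc y ^ lc r A (insert v S') = y ^ e * y ^ lc r (A.erase v) S' := by
          rw [hkey, pow_add]
      _ ≤ ((7:ℝ)/8)^(m+1-2*k) * y ^ lc r (A.erase v) S' := by
          apply mul_le_mul_of_nonneg_right _ (by positivity)
          rw [hy, y_eq, ← pow_mul]
          apply pow_le_pow_of_le_one (by norm_num) (by norm_num)
          omega
  · -- v ∉ S part
    have hset : (A.powersetCard k).filter (fun S => v ∉ S) = (A.erase v).powersetCard k := by
      ext S
      rw [Finset.mem_filter, Finset.mem_powersetCard, Finset.mem_powersetCard,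
        Finset.subset_erase]
      tauto
    rw [hset]
    apply Finset.sum_le_sum
    intro S hS
    apply pow_le_pow_of_le_one hy0 hy1
    unfold lc
    apply Finset.sum_le_sum
    intro w _
    unfold cnt
    apply Finset.card_le_card
    apply Finset.filter_subset_filter
    exact Finset.sdiff_subset_sdiff (Finset.erase_subset v A) (le_refl _)

end S8

namespace S8
open Finset

variable {V : Type*} [DecidableEq V]

lemma G_zero (r : V → V → Bool) (A : Finset V) : G r A 0 = 1 := by
  unfold G
  rw [Finset.powersetCard_zero, Finset.sum_singleton]
  unfold lc
  simp

lemma G_le_Tf : ∀ m : ℕ, ∀ A : Finset V, A.card = m → ∀ r : V → V → Bool,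
    Total r A → ∀ k, 2*k ≤ m → G r A k ≤ Tf m k := by
  intro m
  induction m using Nat.strong_induction_on with
  | _ m ih =>
    intro A hA r hr k hk
    rcases Nat.eq_zero_or_pos k with rfl | hk1
    · rw [G_zero]
      unfold Tf
      simp
    · -- k ≥ 1, m ≥ 2
      have hm2 : 2 ≤ m := by omega
      have hAne : A.Nonempty := Finset.card_pos.mp (by omega)
      obtain ⟨v, hv, hd⟩ := exists_big_indeg r A hr hAne
      rw [hA] at hd
      have hA' : (A.erase v).card = m - 1 := by
        rw [Finset.card_erase_of_mem hv, hA]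
      have hr' : Total r (A.erase v) := hr.subset (Finset.erase_subset v A)
      have hstep := G_step r A m k hA hk1 hk v hv hd
      have hGk1 : G r (A.erase v) (k-1) ≤ (8:ℝ)^(k-1) := by
        calc G r (A.erase v) (k-1) ≤ Tf (m-1) (k-1) :=
              ih (m-1) (by omega) _ hA' r hr' (k-1) (by omega)
          _ ≤ (8:ℝ)^(k-1) := Tf_le _ _
      by_cases hcase : 2*k + 1 ≤ m
      · -- 2k ≤ m - 1
        have hGk : G r (A.erase v) k ≤ Tf (m-1) k :=
          ih (m-1) (by omega) _ hA' r hr' k (by omega)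
        have hTf : ((7:ℝ)/8)^(m+1-2*k) * (8:ℝ)^(k-1) + Tf (m-1) k = Tf m k := by
          unfold Tf
          rw [if_neg (by omega), if_neg (by omega)]
          obtain ⟨b, hb⟩ : ∃ b, m - 1 + 1 - 2*k = b := ⟨_, rfl⟩
          have h1 : m + 1 - 2*k = b + 1 := by omega
          rw [hb, h1, pow_succ]
          ring
        calc G r A k ≤ ((7:ℝ)/8)^(m+1-2*k) * G r (A.erase v) (k-1) + G r (A.erase v) k := hstep
          _ ≤ ((7:ℝ)/8)^(m+1-2*k) * (8:ℝ)^(k-1) + Tf (m-1) k := by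
              gcongr
          _ = Tf m k := hTf
      · -- 2k = m
        have hm : m = 2*k := by omega
        have hGk : G r (A.erase v) k ≤ (8:ℝ)^(k-1) := by
          have hflip := G_flip r (A.erase v) k (by omega)
          have : (A.erase v).card - k = k - 1 := by omega
          rw [this] at hflip
          rw [hflip]
          calc G (fun u v => r v u) (A.erase v) (k-1) ≤ Tf (m-1) (k-1) :=
                ih (m-1) (by omega) _ hA' _ hr'.flip (k-1) (by omega)
            _ ≤ (8:ℝ)^(k-1) := Tf_le _ _
        have he1 : m + 1 - 2*k = 1 := by omega
        have hTf : Tf m k = ((7:ℝ)/8) * (8:ℝ)^(k-1) + (8:ℝ)^(k-1) := by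
          unfold Tf
          rw [if_neg (by omega), he1]
          have h8 : (8:ℝ)^k = 8 * (8:ℝ)^(k-1) := by
            conv_lhs => rw [show k = (k-1) + 1 by omega]
            rw [pow_succ]; ring
          rw [h8]; ring
        calc G r A k ≤ ((7:ℝ)/8)^(m+1-2*k) * G r (A.erase v) (k-1) + G r (A.erase v) k := hstep
          _ ≤ ((7:ℝ)/8)^1 * (8:ℝ)^(k-1) + (8:ℝ)^(k-1) := by
              rw [he1]
              gcongr
          _ = Tf m k := by rw [hTf]; norm_num

lemma G_le_pow (A : Finset V) (r : V → V → Bool) (hr : Total r A) (k : ℕ) :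
    G r A k ≤ (8:ℝ) ^ (min k (A.card - k)) := by
  rcases le_or_gt (2*k) A.card with h | h
  · have hmin : min k (A.card - k) = k := by omega
    rw [hmin]
    calc G r A k ≤ Tf A.card k := G_le_Tf A.card A rfl r hr k h
      _ ≤ (8:ℝ)^k := Tf_le _ _
  · rcases le_or_gt k A.card with h2 | h2
    · have hmin : min k (A.card - k) = A.card - k := by omega
      rw [hmin, G_flip r A k h2]
      calc G (fun u v => r v u) A (A.card - k) ≤ Tf A.card (A.card - k) :=
            G_le_Tf A.card A rfl _ hr.flip (A.card - k) (by omega)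
        _ ≤ (8:ℝ)^(A.card - k) := Tf_le _ _
    · have : A.powersetCard k = ∅ := by
        apply Finset.powersetCard_eq_empty.mpr
        omega
      unfold G
      rw [this, Finset.sum_empty]
      positivity

end S8

namespace S8
open Finset

lemma lc_eq_card {V : Type*} [DecidableEq V] (r : V → V → Bool) (A S : Finset V) :
    lc r A S = (((A \ S) ×ˢ S).filter (fun uv => r uv.1 uv.2 = true)).card := by
  unfold lc cnt
  rw [Finset.card_filter, Finset.sum_product, Finset.sum_comm]
  apply Finset.sum_congr rfl
  intro w _
  rw [Finset.card_filter]

variable {n : ℕ}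

def edgeW (p : Fin n → Fin n → ℝ) (e : Edges n) (b : Bool) : ℝ :=
  if b = true then p e.1.1 e.1.2 else 1 - p e.1.1 e.1.2

lemma prOf_eq (p : Fin n → Fin n → ℝ) (σ : Orient n) :
    prOf p σ = ∏ e : Edges n, edgeW p e (σ e) := rfl

lemma sum_prod_edge (g : Edges n → Bool → ℝ) :
    ∑ σ : Orient n, ∏ e : Edges n, g e (σ e) = ∏ e : Edges n, (g e true + g e false) := by
  classical
  calc ∑ σ : Orient n, ∏ e : Edges n, g e (σ e)
      = ∑ σ ∈ Fintype.piFinset (fun _ : Edges n => (univ : Finset Bool)),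
          ∏ e : Edges n, g e (σ e) := by rw [Fintype.piFinset_univ]
    _ = ∏ e : Edges n, ∑ b ∈ (univ : Finset Bool), g e b := (Finset.prod_univ_sum _ _).symm
    _ = ∏ e : Edges n, (g e true + g e false) := by
        apply Finset.prod_congr rfl
        intro e _
        exact Fintype.sum_bool (g e)

noncomputable def rmaj (p : Fin n → Fin n → ℝ) (u v : Fin n) : Bool :=
  if u < v then decide ((1:ℝ)/2 ≤ p u v)
  else if v < u then !(decide ((1:ℝ)/2 ≤ p v u)) else false

lemma rmaj_total (p : Fin n → Fin n → ℝ) : Total (rmaj p) (univ : Finset (Fin n)) := by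
  intro u _ v _ huv
  unfold rmaj
  rcases lt_trichotomy u v with h | h | h
  · rw [if_pos h, if_neg (asymm h), if_pos h, Bool.not_not]
  · exact absurd h huv
  · rw [if_neg (asymm h), if_pos h, if_pos h]

def req (S : Finset (Fin n)) (e : Edges n) : Option Bool :=
  if e.1.1 ∈ S ∧ e.1.2 ∉ S then some true
  else if e.1.2 ∈ S ∧ e.1.1 ∉ S then some false else none

def gW (p : Fin n → Fin n → ℝ) (S : Finset (Fin n)) (e : Edges n) (b : Bool) : ℝ :=
  match req S e with
  | none => edgeW p e b
  | some b' => if b = b' then edgeW p e b else 0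

noncomputable def back (p : Fin n → Fin n → ℝ) (S : Finset (Fin n)) (e : Edges n) : Bool :=
  match req S e with
  | none => false
  | some true => rmaj p e.1.2 e.1.1
  | some false => rmaj p e.1.1 e.1.2

end S8

namespace S8
open Finset

variable {n : ℕ}

section bounds
variable (p : Fin n → Fin n → ℝ) (φ : ℝ)
  (hp : ∀ i j : Fin n, i ≠ j → φ ≤ p i j ∧ p i j ≤ 1 - φ)
  (hφ0 : 0 ≤ φ) (hφ2 : φ ≤ 1/2)

include hp hφ0 hφ2

lemma pe_bounds (e : Edges n) : 0 ≤ p e.1.1 e.1.2 ∧ p e.1.1 e.1.2 ≤ 1 := by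
  have h := hp e.1.1 e.1.2 (ne_of_lt e.2)
  constructor <;> linarith [h.1, h.2]

lemma edgeW_nonneg (e : Edges n) (b : Bool) : 0 ≤ edgeW p e b := by
  have h := pe_bounds p φ hp hφ0 hφ2 e
  unfold edgeW
  split <;> linarith [h.1, h.2]

lemma gW_nonneg (S : Finset (Fin n)) (e : Edges n) (b : Bool) : 0 ≤ gW p S e b := by
  unfold gW
  rcases hre : req S e with _ | b' <;> simp only []
  · exact edgeW_nonneg p φ hp hφ0 hφ2 e b
  · split
    · exact edgeW_nonneg p φ hp hφ0 hφ2 e b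
    · exact le_refl 0

lemma prOf_nonneg (σ : Orient n) : 0 ≤ prOf p σ := by
  rw [prOf_eq]
  apply Finset.prod_nonneg
  intro e _
  exact edgeW_nonneg p φ hp hφ0 hφ2 e (σ e)

lemma vW_none (S : Finset (Fin n)) (e : Edges n) (h : req S e = none) :
    gW p S e true + gW p S e false = 1 := by
  unfold gW
  rw [h]
  simp only [edgeW]
  norm_num

lemma vW_cut (S : Finset (Fin n)) (e : Edges n) (b' : Bool) (h : req S e = some b') :
    gW p S e true + gW p S e false ≤
      (max ((7:ℝ)/8) (1-φ)) * (if back p S e = true then (49:ℝ)/64 else 1) := by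
  set c := max ((7:ℝ)/8) (1-φ) with hc
  have hc78 : (7:ℝ)/8 ≤ c := le_max_left _ _
  have hc1φ : 1 - φ ≤ c := le_max_right _ _
  have hcy : (1:ℝ)/2 ≤ c * ((49:ℝ)/64) := by
    calc (1:ℝ)/2 ≤ (7/8) * (49/64) := by norm_num
      _ ≤ c * (49/64) := by nlinarith
  have hpb := hp e.1.1 e.1.2 (ne_of_lt e.2)
  have hlt : e.1.1 < e.1.2 := e.2
  unfold gW back
  rw [h]
  cases b' with
  | true =>
    simp only [if_pos rfl, if_neg (by simp : ¬(false = true))]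
    -- value = edgeW p e true + 0 = p i j
    unfold edgeW rmaj
    rw [if_pos rfl]
    rw [if_neg (asymm hlt), if_pos hlt]
    by_cases hhalf : (1:ℝ)/2 ≤ p e.1.1 e.1.2
    · rw [decide_eq_true hhalf]
      simp only [Bool.not_true, if_neg (by simp : ¬(false = true))]
      calc p e.1.1 e.1.2 + 0 ≤ 1 - φ := by linarith [hpb.2]
        _ ≤ c * 1 := by linarith
    · rw [decide_eq_false hhalf]
      simp only [Bool.not_false, if_pos rfl]
      calc p e.1.1 e.1.2 + 0 ≤ 1/2 := by linarith
        _ ≤ c * (49/64) := hcy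
  | false =>
    simp only [if_neg (by simp : ¬(true = false)), if_pos rfl]
    unfold edgeW rmaj
    rw [if_pos hlt]
    simp only [if_neg (by simp : ¬(false = true))]
    by_cases hhalf : (1:ℝ)/2 ≤ p e.1.1 e.1.2
    · rw [decide_eq_true hhalf]
      rw [if_pos rfl]
      calc 0 + (1 - p e.1.1 e.1.2) ≤ 1/2 := by linarith
        _ ≤ c * (49/64) := hcy
    · rw [decide_eq_false hhalf]
      rw [if_neg (by simp : ¬(false = true))]
      calc 0 + (1 - p e.1.1 e.1.2) ≤ 1 - φ := by linarith [hpb.1]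
        _ ≤ c * 1 := by linarith

end bounds
end S8

namespace S8
open Finset

variable {n : ℕ}

lemma back_cut (p : Fin n → Fin n → ℝ) (S : Finset (Fin n)) (e : Edges n)
    (h : back p S e = true) : req S e ≠ none := by
  unfold back at h
  intro hn
  rw [hn] at h
  simp at h

lemma cut_card_ge (S : Finset (Fin n)) :
    S.card * (n - S.card) ≤ ((univ : Finset (Edges n)).filter (fun e => req S e ≠ none)).card := by
  have hcard : (S ×ˢ ((univ : Finset (Fin n)) \ S)).card = S.card * (n - S.card) := by
    rw [Finset.card_product, Finset.card_univ_diff, Fintype.card_fin]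
  rw [← hcard]
  apply Finset.card_le_card_of_surjOn (fun e : Edges n =>
    if e.1.1 ∈ S then (e.1.1, e.1.2) else (e.1.2, e.1.1))
  rintro ⟨a, b⟩ hab
  simp only [Finset.coe_product, Set.mem_prod, Finset.mem_coe, Finset.mem_sdiff] at hab
  obtain ⟨haS, -, hbS⟩ := hab
  have hne : a ≠ b := fun h => hbS (h ▸ haS)
  rcases lt_or_gt_of_ne hne with hlt | hgt
  · refine ⟨⟨(a,b), hlt⟩, ?_, ?_⟩
    · simp only [Finset.coe_filter, Set.mem_setOf_eq, Finset.mem_univ, true_and]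
      unfold req
      rw [if_pos ⟨haS, hbS⟩]
      simp
    · simp only [if_pos haS]
  · refine ⟨⟨(b,a), hgt⟩, ?_, ?_⟩
    · simp only [Finset.coe_filter, Set.mem_setOf_eq, Finset.mem_univ, true_and]
      unfold req
      rw [if_neg (fun hh => hbS hh.1), if_pos ⟨haS, hbS⟩]
      simp
    · simp only [if_neg hbS]

lemma back_card_ge (p : Fin n → Fin n → ℝ) (S : Finset (Fin n)) :
    lc (rmaj p) (univ : Finset (Fin n)) S ≤
      ((univ : Finset (Edges n)).filter (fun e => back p S e = true)).card := by
  rw [lc_eq_card]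
  apply Finset.card_le_card_of_surjOn (fun e : Edges n =>
    match req S e with
    | some true => (e.1.2, e.1.1)
    | _ => (e.1.1, e.1.2))
  rintro ⟨u, w⟩ huw
  simp only [Finset.coe_filter, Set.mem_setOf_eq, Finset.mem_product, Finset.mem_sdiff,
    Finset.mem_univ, true_and] at huw
  obtain ⟨⟨huS, hwS⟩, hr⟩ := huw
  have hne : u ≠ w := fun h => huS (h ▸ hwS)
  rcases lt_or_gt_of_ne hne with hlt | hgt
  · have hreq : req S ⟨(u,w), hlt⟩ = some false := by
      unfold req
      rw [if_neg (fun hh => huS hh.1), if_pos ⟨hwS, huS⟩]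
    refine ⟨⟨(u,w), hlt⟩, ?_, ?_⟩
    · simp only [Finset.coe_filter, Set.mem_setOf_eq, Finset.mem_univ, true_and]
      unfold back
      rw [hreq]
      exact hr
    · show (match req S (⟨(u,w), hlt⟩ : Edges n) with
        | some true => ((⟨(u,w), hlt⟩ : Edges n).1.2, (⟨(u,w), hlt⟩ : Edges n).1.1)
        | _ => ((⟨(u,w), hlt⟩ : Edges n).1.1, (⟨(u,w), hlt⟩ : Edges n).1.2)) = (u, w)
      rw [hreq]
  · have hreq : req S ⟨(w,u), hgt⟩ = some true := by
      unfold req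
      rw [if_pos ⟨hwS, huS⟩]
    refine ⟨⟨(w,u), hgt⟩, ?_, ?_⟩
    · simp only [Finset.coe_filter, Set.mem_setOf_eq, Finset.mem_univ, true_and]
      unfold back
      rw [hreq]
      exact hr
    · show (match req S (⟨(w,u), hgt⟩ : Edges n) with
        | some true => ((⟨(w,u), hgt⟩ : Edges n).1.2, (⟨(w,u), hgt⟩ : Edges n).1.1)
        | _ => ((⟨(w,u), hgt⟩ : Edges n).1.1, (⟨(w,u), hgt⟩ : Edges n).1.2)) = (u, w)
      rw [hreq]

end S8

namespace S8
open Finset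

variable {n : ℕ}

lemma W_le (p : Fin n → Fin n → ℝ) (φ : ℝ)
    (hp : ∀ i j : Fin n, i ≠ j → φ ≤ p i j ∧ p i j ≤ 1 - φ)
    (hφ0 : 0 ≤ φ) (hφ2 : φ ≤ 1/2) (S : Finset (Fin n)) :
    ∏ e : Edges n, (gW p S e true + gW p S e false) ≤
      (max ((7:ℝ)/8) (1-φ)) ^ (S.card * (n - S.card)) *
        ((49:ℝ)/64) ^ (lc (rmaj p) (univ : Finset (Fin n)) S) := by
  set c := max ((7:ℝ)/8) (1-φ) with hc
  have hc0 : (0:ℝ) ≤ c := le_trans (by norm_num) (le_max_left _ _)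
  have hc1 : c ≤ 1 := by
    apply max_le (by norm_num)
    linarith
  set y : ℝ := (49:ℝ)/64 with hy
  have hy0 : (0:ℝ) ≤ y := by norm_num [hy]
  have hy1 : y ≤ 1 := by norm_num [hy]
  have step1 : ∏ e : Edges n, (gW p S e true + gW p S e false) ≤
      ∏ e : Edges n, (if req S e ≠ none then c * (if back p S e = true then y else 1) else 1) := by
    apply Finset.prod_le_prod
    · intro e _
      have := gW_nonneg p φ hp hφ0 hφ2 S e true
      have := gW_nonneg p φ hp hφ0 hφ2 S e false
      linarith
    · intro e _
      rcases hre : req S e with _ | b'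
      · rw [if_neg (by simp [hre])]
        exact le_of_eq (vW_none p φ hp hφ0 hφ2 S e hre)
      · rw [if_pos (by simp [hre])]
        exact vW_cut p φ hp hφ0 hφ2 S e b' hre
  have step2 : ∏ e : Edges n, (if req S e ≠ none then c * (if back p S e = true then y else 1) else 1)
      = c ^ (((univ : Finset (Edges n)).filter (fun e => req S e ≠ none)).card) *
        y ^ (((univ : Finset (Edges n)).filter (fun e => back p S e = true)).card) := by
    rw [← Finset.prod_filter]
    rw [Finset.prod_mul_distrib, Finset.prod_const]
    congr 1
    rw [← Finset.prod_filter, Finset.filter_filter, Finset.prod_const]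
    congr 2
    apply Finset.filter_congr
    intro e _
    constructor
    · rintro ⟨-, h⟩; exact h
    · intro h; exact ⟨back_cut p S e h, h⟩
  calc ∏ e : Edges n, (gW p S e true + gW p S e false)
      ≤ c ^ (((univ : Finset (Edges n)).filter (fun e => req S e ≠ none)).card) *
        y ^ (((univ : Finset (Edges n)).filter (fun e => back p S e = true)).card) := by
        rw [← step2]; exact step1
    _ ≤ c ^ (S.card * (n - S.card)) * y ^ (lc (rmaj p) (univ : Finset (Fin n)) S) := by
        apply mul_le_mul
        · exact pow_le_pow_of_le_one hc0 hc1 (cut_card_ge S)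
        · exact pow_le_pow_of_le_one hy0 hy1 (back_card_ge p S)
        · positivity
        · positivity

end S8

namespace S8
open Finset

variable {n : ℕ}

lemma beats_total (σ : Orient n) {i j : Fin n} (hne : i ≠ j) :
    beats σ i j ∨ beats σ j i := by
  rcases lt_or_gt_of_ne hne with h | h
  · cases hσ : σ ⟨(i,j), h⟩
    · right; exact Or.inr ⟨h, hσ⟩
    · left; exact Or.inl ⟨h, hσ⟩
  · cases hσ : σ ⟨(j,i), h⟩
    · left; exact Or.inr ⟨h, hσ⟩
    · right; exact Or.inl ⟨h, hσ⟩

noncomputable def Dset (σ : Orient n) : Finset (Fin n) :=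
  @Finset.filter _ (fun i => ∀ j, Relation.ReflTransGen (beats σ) i j)
    (Classical.decPred _) Finset.univ

lemma mem_Dset {σ : Orient n} {i : Fin n} :
    i ∈ Dset σ ↔ ∀ j, Relation.ReflTransGen (beats σ) i j := by
  unfold Dset
  rw [@Finset.mem_filter _ _ (Classical.decPred _)]
  simp

lemma Dset_nonempty (σ : Orient n) (hn : 0 < n) : (Dset σ).Nonempty := by
  classical
  have hunne : (Finset.univ : Finset (Fin n)).Nonempty := ⟨⟨0, hn⟩, Finset.mem_univ _⟩
  obtain ⟨v, -, hmax⟩ := Finset.exists_max_image Finset.univ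
    (fun v => ((Finset.univ : Finset (Fin n)).filter
      (fun x => Relation.ReflTransGen (beats σ) v x)).card) hunne
  refine ⟨v, mem_Dset.mpr ?_⟩
  by_contra hcon
  push_neg at hcon
  obtain ⟨u, hu⟩ := hcon
  have hne : u ≠ v := by
    rintro rfl
    exact hu Relation.ReflTransGen.refl
  have hbuv : beats σ u v := by
    rcases beats_total σ hne with h | h
    · exact h
    · exact absurd (Relation.ReflTransGen.single h) hu
  have hreach_uv : Relation.ReflTransGen (beats σ) u v :=
    Relation.ReflTransGen.single hbuv
  have hsub : (Finset.univ.filter (fun x => Relation.ReflTransGen (beats σ) v x)) ⊆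
      (Finset.univ.filter (fun x => Relation.ReflTransGen (beats σ) u x)) := by
    intro x hx
    rw [Finset.mem_filter] at hx ⊢
    exact ⟨hx.1, hreach_uv.trans hx.2⟩
  have hss : (Finset.univ.filter (fun x => Relation.ReflTransGen (beats σ) v x)) ⊂
      (Finset.univ.filter (fun x => Relation.ReflTransGen (beats σ) u x)) := by
    refine ⟨hsub, fun hsub2 => ?_⟩
    have hu_mem : u ∈ Finset.univ.filter (fun x => Relation.ReflTransGen (beats σ) u x) := by
      rw [Finset.mem_filter]
      exact ⟨Finset.mem_univ _, Relation.ReflTransGen.refl⟩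
    have := hsub2 hu_mem
    rw [Finset.mem_filter] at this
    exact hu this.2
  exact absurd (hmax u (Finset.mem_univ _)) (not_le.mpr (Finset.card_lt_card hss))

lemma Dset_dominant (σ : Orient n) {i j : Fin n} (hi : i ∈ Dset σ) (hj : j ∉ Dset σ) :
    beats σ i j := by
  rw [mem_Dset] at hi hj
  have hne : i ≠ j := by
    rintro rfl; exact hj hi
  rcases beats_total σ hne with h | h
  · exact h
  · exfalso
    apply hj
    intro w
    exact (Relation.ReflTransGen.single h).trans (hi w)

lemma Dset_edge (σ : Orient n) (S : Finset (Fin n)) (hS : Dset σ = S)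
    (e : Edges n) (b' : Bool) (hreq : req S e = some b') : σ e = b' := by
  subst hS
  unfold req at hreq
  split at hreq
  · rename_i hcut
    have hb : beats σ e.1.1 e.1.2 := Dset_dominant σ hcut.1 hcut.2
    cases hb with
    | inl h =>
      obtain ⟨hlt, hσ⟩ := h
      have : (⟨(e.1.1, e.1.2), hlt⟩ : Edges n) = e := Subtype.ext (Prod.mk.eta)
      rw [this] at hσ
      exact hσ.trans (Option.some.inj hreq)
    | inr h =>
      exact absurd e.2 (asymm h.1)
  · split at hreq
    · rename_i hcut
      have hb : beats σ e.1.2 e.1.1 := Dset_dominant σ hcut.1 hcut.2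
      cases hb with
      | inl h =>
        exact absurd e.2 (asymm h.1)
      | inr h =>
        obtain ⟨hlt, hσ⟩ := h
        have : (⟨(e.1.1, e.1.2), hlt⟩ : Edges n) = e := Subtype.ext (Prod.mk.eta)
        rw [this] at hσ
        exact hσ.trans (Option.some.inj hreq)
    · exact absurd hreq (by simp)

lemma prOf_eq_gW (p : Fin n → Fin n → ℝ) (σ : Orient n) (S : Finset (Fin n))
    (hdom : ∀ (e : Edges n) (b' : Bool), req S e = some b' → σ e = b') :
    prOf p σ = ∏ e : Edges n, gW p S e (σ e) := by
  rw [prOf_eq]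
  apply Finset.prod_congr rfl
  intro e _
  unfold gW
  rcases hre : req S e with _ | b'
  · rfl
  · show edgeW p e (σ e) = if σ e = b' then edgeW p e (σ e) else 0
    rw [if_pos (hdom e b' hre)]

lemma sum_prOf_one (p : Fin n → Fin n → ℝ) : ∑ σ : Orient n, prOf p σ = 1 := by
  have : ∀ σ : Orient n, prOf p σ = ∏ e : Edges n, edgeW p e (σ e) := fun σ => rfl
  rw [Finset.sum_congr rfl (fun σ _ => this σ), sum_prod_edge]
  rw [Finset.prod_congr rfl (fun (e : Edges n) _ => (by unfold edgeW; norm_num :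
    edgeW p e true + edgeW p e false = 1))]
  exact Finset.prod_const_one

end S8

namespace S8
open Finset

variable {n : ℕ}

noncomputable def G' (r : Fin n → Fin n → Bool) (k : ℕ) : ℝ :=
  ∑ S ∈ (univ : Finset (Fin n)).powersetCard k, ((49:ℝ)/64) ^ (lc r univ S)

lemma fiber_le (p : Fin n → Fin n → ℝ) (φ : ℝ)
    (hp : ∀ i j : Fin n, i ≠ j → φ ≤ p i j ∧ p i j ≤ 1 - φ)
    (hφ0 : 0 ≤ φ) (hφ2 : φ ≤ 1/2)
    (S : Finset (Fin n)) (T : Finset (Orient n)) (hT : ∀ σ ∈ T, Dset σ = S) :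
    ∑ σ ∈ T, prOf p σ ≤ (max ((7:ℝ)/8) (1-φ)) ^ (S.card * (n - S.card)) *
      ((49:ℝ)/64) ^ (lc (rmaj p) (univ : Finset (Fin n)) S) := by
  calc ∑ σ ∈ T, prOf p σ
      = ∑ σ ∈ T, ∏ e : Edges n, gW p S e (σ e) :=
        Finset.sum_congr rfl (fun σ hσ =>
          prOf_eq_gW p σ S (fun e b' hreq => Dset_edge σ S (hT σ hσ) e b' hreq))
    _ ≤ ∑ σ : Orient n, ∏ e : Edges n, gW p S e (σ e) := by
        apply Finset.sum_le_sum_of_subset_of_nonneg (Finset.subset_univ T)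
        intro σ _ _
        exact Finset.prod_nonneg (fun e _ => gW_nonneg p φ hp hφ0 hφ2 S e (σ e))
    _ = ∏ e : Edges n, (gW p S e true + gW p S e false) := sum_prod_edge _
    _ ≤ _ := W_le p φ hp hφ0 hφ2 S

lemma geo2 (ρ : ℝ) (h0 : 0 ≤ ρ) (h2 : ρ ≤ 1/2) (m : ℕ) :
    ∑ j ∈ Finset.range m, ρ^j ≤ 2 := by
  induction m with
  | zero => simp
  | succ m ihm =>
    rw [Finset.sum_range_succ']
    have h1 : ∑ i ∈ Finset.range m, ρ^(i+1) = ρ * ∑ i ∈ Finset.range m, ρ^i := by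
      rw [Finset.mul_sum]
      apply Finset.sum_congr rfl
      intro i _
      rw [pow_succ]; ring
    rw [h1]
    have hnn : (0:ℝ) ≤ ∑ i ∈ Finset.range m, ρ^i :=
      Finset.sum_nonneg (fun i _ => pow_nonneg h0 i)
    have : ρ * ∑ i ∈ Finset.range m, ρ^i ≤ (1/2) * 2 := by
      apply mul_le_mul h2 ihm hnn (by norm_num)
    simp only [pow_zero]
    linarith

lemma sum_Ico_pow_le (ρ : ℝ) (h0 : 0 ≤ ρ) (h2 : ρ ≤ 1/2) (m : ℕ) :
    ∑ k ∈ Finset.Ico 1 m, ρ^k ≤ 2 * ρ := by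
  rw [Finset.sum_Ico_eq_sum_range]
  have h1 : ∀ k, ρ^(1+k) = ρ * ρ^k := by
    intro k; rw [pow_add, pow_one]
  rw [Finset.sum_congr rfl (fun k _ => h1 k), ← Finset.mul_sum]
  calc ρ * ∑ k ∈ Finset.range (m-1), ρ^k ≤ ρ * 2 :=
        mul_le_mul_of_nonneg_left (geo2 ρ h0 h2 _) h0
    _ = 2 * ρ := by ring

lemma bad_le (p : Fin n → Fin n → ℝ) (φ : ℝ)
    (hp : ∀ i j : Fin n, i ≠ j → φ ≤ p i j ∧ p i j ≤ 1 - φ)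
    (hφ0 : 0 ≤ φ) (hφ2 : φ ≤ 1/2)
    (hG : ∀ k, G' (rmaj p) k ≤ (8:ℝ) ^ (min k (n - k)))
    (hρ2 : 8 * (max ((7:ℝ)/8) (1-φ)) ^ (n / 2) ≤ 1/2)
    (NS : Finset (Orient n))
    (hNS : ∀ σ ∈ NS, ¬ ∀ i j : Fin n, Relation.ReflTransGen (beats σ) i j) :
    ∑ σ ∈ NS, prOf p σ ≤ 32 * (max ((7:ℝ)/8) (1-φ)) ^ (n / 2) := by
  classical
  set c := max ((7:ℝ)/8) (1-φ) with hc
  have hc0 : (0:ℝ) ≤ c := le_trans (by norm_num) (le_max_left _ _)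
  have hc1 : c ≤ 1 := max_le (by norm_num) (by linarith)
  set q := n / 2 with hq
  set ρ := 8 * c ^ q with hρ
  have hρ0 : (0:ℝ) ≤ ρ := by positivity
  set 𝒮 := (Finset.Ico 1 n).biUnion
    (fun k => (Finset.univ : Finset (Fin n)).powersetCard k) with h𝒮
  have hmap : ∀ σ ∈ NS, Dset σ ∈ 𝒮 := by
    intro σ hσ
    have hns := hNS σ hσ
    push_neg at hns
    obtain ⟨i, j, hij⟩ := hns
    have hn0 : 0 < n := i.pos
    have hne : (Dset σ).Nonempty := Dset_nonempty σ hn0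
    have hproper : Dset σ ≠ Finset.univ := by
      intro h
      have : i ∈ Dset σ := h ▸ Finset.mem_univ i
      exact hij (mem_Dset.mp this j)
    have hcard1 : 1 ≤ (Dset σ).card := Finset.card_pos.mpr hne
    have hcardn : (Dset σ).card < n := by
      have := Finset.card_lt_card (Finset.ssubset_univ_iff.mpr hproper)
      rwa [Finset.card_univ, Fintype.card_fin] at this
    rw [h𝒮, Finset.mem_biUnion]
    exact ⟨(Dset σ).card, Finset.mem_Ico.mpr ⟨hcard1, hcardn⟩,
      Finset.mem_powersetCard.mpr ⟨Finset.subset_univ _, rfl⟩⟩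
  have hdisj : (↑(Finset.Ico 1 n) : Set ℕ).PairwiseDisjoint
      (fun k => (Finset.univ : Finset (Fin n)).powersetCard k) := by
    intro a _ b _ hab
    rw [Function.onFun, Finset.disjoint_left]
    intro S hSa hSb
    exact hab ((Finset.mem_powersetCard.mp hSa).2.symm.trans
      (Finset.mem_powersetCard.mp hSb).2)
  have hperk : ∀ k ∈ Finset.Ico 1 n,
      ∑ S ∈ (Finset.univ : Finset (Fin n)).powersetCard k,
        (c ^ (S.card * (n - S.card)) * ((49:ℝ)/64) ^ (lc (rmaj p) Finset.univ S))
      ≤ ρ^k + ρ^(n-k) := by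
    intro k hk
    rw [Finset.mem_Ico] at hk
    have heq : ∑ S ∈ (Finset.univ : Finset (Fin n)).powersetCard k,
        (c ^ (S.card * (n - S.card)) * ((49:ℝ)/64) ^ (lc (rmaj p) Finset.univ S))
        = c ^ (k * (n-k)) * G' (rmaj p) k := by
      rw [G', Finset.mul_sum]
      apply Finset.sum_congr rfl
      intro S hS
      rw [(Finset.mem_powersetCard.mp hS).2]
    rw [heq]
    have hexp : q * min k (n-k) ≤ k * (n-k) := by
      rcases le_total k (n-k) with h | h
      · rw [min_eq_left h]
        rw [mul_comm]
        apply Nat.mul_le_mul_left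
        omega
      · rw [min_eq_right h]
        apply Nat.mul_le_mul_right
        omega
    have h1 : c ^ (k * (n-k)) ≤ (c ^ q) ^ (min k (n-k)) := by
      rw [← pow_mul]
      exact pow_le_pow_of_le_one hc0 hc1 hexp
    have hGnn' : (0:ℝ) ≤ G' (rmaj p) k :=
      Finset.sum_nonneg (fun S _ => by positivity)
    have h2 : c ^ (k * (n-k)) * G' (rmaj p) k
        ≤ (c ^ q) ^ (min k (n-k)) * (8:ℝ) ^ (min k (n-k)) := by
      apply mul_le_mul h1 (hG k) hGnn' (by positivity)
    have h3 : (c ^ q) ^ (min k (n-k)) * (8:ℝ) ^ (min k (n-k)) = ρ ^ (min k (n-k)) := by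
      rw [hρ, mul_pow]
      ring
    rw [h3] at h2
    apply le_trans h2
    rcases min_cases k (n-k) with ⟨hmeq, -⟩ | ⟨hmeq, -⟩ <;> rw [hmeq]
    · have : (0:ℝ) ≤ ρ^(n-k) := by positivity
      linarith
    · have : (0:ℝ) ≤ ρ^k := by positivity
      linarith
  have hGnn : ∀ S : Finset (Fin n), (0:ℝ) ≤
      c ^ (S.card * (n - S.card)) * ((49:ℝ)/64) ^ (lc (rmaj p) Finset.univ S) := by
    intro S; positivity
  calc ∑ σ ∈ NS, prOf p σ
      = ∑ S ∈ 𝒮, ∑ σ ∈ NS.filter (fun σ => Dset σ = S), prOf p σ :=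
        (Finset.sum_fiberwise_of_maps_to hmap (prOf p)).symm
    _ ≤ ∑ S ∈ 𝒮, (c ^ (S.card * (n - S.card)) * ((49:ℝ)/64) ^ (lc (rmaj p) Finset.univ S)) := by
        apply Finset.sum_le_sum
        intro S _
        exact fiber_le p φ hp hφ0 hφ2 S _ (fun σ hσ => (Finset.mem_filter.mp hσ).2)
    _ = ∑ k ∈ Finset.Ico 1 n, ∑ S ∈ (Finset.univ : Finset (Fin n)).powersetCard k,
          (c ^ (S.card * (n - S.card)) * ((49:ℝ)/64) ^ (lc (rmaj p) Finset.univ S)) := by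
        rw [h𝒮, Finset.sum_biUnion hdisj]
    _ ≤ ∑ k ∈ Finset.Ico 1 n, (ρ^k + ρ^(n-k)) := Finset.sum_le_sum hperk
    _ = ∑ k ∈ Finset.Ico 1 n, ρ^k + ∑ k ∈ Finset.Ico 1 n, ρ^(n-k) := Finset.sum_add_distrib
    _ = ∑ k ∈ Finset.Ico 1 n, ρ^k + ∑ k ∈ Finset.Ico 1 n, ρ^k := by
        congr 1
        refine Finset.sum_nbij' (fun k => n - k) (fun k => n - k) ?_ ?_ ?_ ?_ ?_
        · intro a ha; rw [Finset.mem_Ico] at ha ⊢; omega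
        · intro a ha; rw [Finset.mem_Ico] at ha ⊢; omega
        · intro a ha; rw [Finset.mem_Ico] at ha; omega
        · intro a ha; rw [Finset.mem_Ico] at ha; omega
        · intro a _; rfl
    _ ≤ 2*ρ + 2*ρ := by
        have := sum_Ico_pow_le ρ hρ0 (by rw [hρ]; exact hρ2) n
        linarith
    _ ≤ 32 * c ^ q := by
        rw [hρ]; linarith [pow_nonneg hc0 q]

end S8


namespace S8
open Finset

lemma G'_eq_G {n : ℕ} (r : Fin n → Fin n → Bool) (k : ℕ) :
    G' r k = G r (Finset.univ : Finset (Fin n)) k := rfl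

lemma hG_all {n : ℕ} (p : Fin n → Fin n → ℝ) (k : ℕ) :
    G' (rmaj p) k ≤ (8:ℝ) ^ (min k (n - k)) := by
  rw [G'_eq_G]
  have := G_le_pow (Finset.univ : Finset (Fin n)) (rmaj p) (rmaj_total p) k
  rwa [Finset.card_univ, Fintype.card_fin] at this

end S8

open S8 Filter in
/-- if every edge probability lies in `[f(n), 1 - f(n)]` with `f(n) ≤ 1/2` and
`f(n) ∈ ω(1/n)` (i.e. `n · f(n) → ∞`), then the probability that the random tournament is
strongly connected (equivalently `TC(T) = A`) tends to `1`. -/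
theorem stmt8 (f : ℕ → ℝ) (hf0 : ∀ n, 0 ≤ f n) (hf2 : ∀ n, f n ≤ 1 / 2)
    (hfω : Filter.Tendsto (fun n : ℕ => (n : ℝ) * f n) Filter.atTop Filter.atTop)
    (p : ∀ n : ℕ, Fin n → Fin n → ℝ)
    (hp : ∀ n : ℕ, ∀ i j : Fin n, i ≠ j → p n i j ∈ Set.Icc (f n) (1 - f n)) :
    Filter.Tendsto
      (fun n : ℕ => Pr (p n) {σ : Orient n | ∀ i j : Fin n, Relation.ReflTransGen (beats σ) i j})
      Filter.atTop (nhds 1) := by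
  classical
  have hp' : ∀ n : ℕ, ∀ i j : Fin n, i ≠ j → f n ≤ p n i j ∧ p n i j ≤ 1 - f n := by
    intro n i j hij
    exact Set.mem_Icc.mp (hp n i j hij)
  -- the "bad" probability
  set B : ℕ → ℝ := fun n => ∑ σ ∈ Finset.univ.filter
    (fun σ : Orient n => ¬ ∀ i j : Fin n, Relation.ReflTransGen (beats σ) i j), prOf (p n) σ
    with hBdef
  -- Pr = 1 - B
  have hPr : ∀ n : ℕ, Pr (p n)
      {σ : Orient n | ∀ i j : Fin n, Relation.ReflTransGen (beats σ) i j} = 1 - B n := by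
    intro n
    unfold Pr
    have h1 : ∀ σ : Orient n,
        ({σ : Orient n | ∀ i j : Fin n, Relation.ReflTransGen (beats σ) i j}).indicator
          (prOf (p n)) σ
        = if (∀ i j : Fin n, Relation.ReflTransGen (beats σ) i j) then prOf (p n) σ else 0 := by
      intro σ
      rw [Set.indicator_apply]
      congr 1
    rw [Finset.sum_congr rfl (fun σ _ => h1 σ), ← Finset.sum_filter]
    have h2 := Finset.sum_filter_add_sum_filter_not (Finset.univ : Finset (Orient n))
      (fun σ : Orient n => ∀ i j : Fin n, Relation.ReflTransGen (beats σ) i j) (prOf (p n))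
    rw [sum_prOf_one (p n)] at h2
    rw [hBdef]
    simp only []
    linarith [h2]
  have hB0 : ∀ n : ℕ, 0 ≤ B n := by
    intro n
    apply Finset.sum_nonneg
    intro σ _
    exact prOf_nonneg (p n) (f n) (hp' n) (hf0 n) (hf2 n) σ
  -- the decay rate
  set C : ℕ → ℝ := fun n => (max ((7:ℝ)/8) (1 - f n)) ^ (n / 2) with hCdef
  set X : ℕ → ℝ := fun n => min ((1:ℝ)/8) (f n) * ((n / 2 : ℕ) : ℝ) with hXdef
  have hC_le : ∀ n : ℕ, C n ≤ Real.exp (-(X n)) := by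
    intro n
    have hmineq : max ((7:ℝ)/8) (1 - f n) = 1 - min ((1:ℝ)/8) (f n) := by
      rcases le_total ((1:ℝ)/8) (f n) with h | h
      · rw [min_eq_left h, max_eq_left (by linarith)]
        norm_num
      · rw [min_eq_right h, max_eq_right (by linarith)]
    have hm0 : 0 ≤ min ((1:ℝ)/8) (f n) := le_min (by norm_num) (hf0 n)
    have hm1 : min ((1:ℝ)/8) (f n) ≤ 1/8 := min_le_left _ _
    have hstep : 1 - min ((1:ℝ)/8) (f n) ≤ Real.exp (-(min ((1:ℝ)/8) (f n))) := by
      have := Real.add_one_le_exp (-(min ((1:ℝ)/8) (f n)))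
      linarith
    calc C n = (1 - min ((1:ℝ)/8) (f n)) ^ (n/2) := by rw [hCdef]; simp only []; rw [hmineq]
      _ ≤ (Real.exp (-(min ((1:ℝ)/8) (f n)))) ^ (n/2) := by
          apply pow_le_pow_left₀ (by linarith) hstep
      _ = Real.exp (-(X n)) := by
          rw [← Real.exp_nat_mul, hXdef]
          congr 1
          ring
  have hC0 : ∀ n : ℕ, 0 ≤ C n := by
    intro n
    rw [hCdef]
    positivity
  -- X → ∞
  have hhalf : Tendsto (fun n : ℕ => (n / 2 : ℕ)) atTop atTop := by
    apply tendsto_atTop_atTop.mpr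
    intro b
    exact ⟨2*b + 2, fun a ha => by omega⟩
  have hA : Tendsto (fun n : ℕ => (1/8 : ℝ) * ((n / 2 : ℕ) : ℝ)) atTop atTop := by
    apply Tendsto.const_mul_atTop (by norm_num : (0:ℝ) < 1/8)
    exact tendsto_natCast_atTop_atTop.comp hhalf
  have hB' : Tendsto (fun n : ℕ => f n * ((n / 2 : ℕ) : ℝ)) atTop atTop := by
    apply tendsto_atTop_mono' atTop ?_ (hfω.atTop_div_const (by norm_num : (0:ℝ) < 4))
    filter_upwards [eventually_ge_atTop 2] with n hn
    have hcast : ((n:ℝ)) / 4 ≤ ((n / 2 : ℕ) : ℝ) := by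
      have : n ≤ 4 * (n / 2) := by omega
      have h4 : ((n:ℝ)) ≤ 4 * ((n / 2 : ℕ) : ℝ) := by
        calc ((n:ℝ)) ≤ ((4 * (n / 2) : ℕ) : ℝ) := Nat.cast_le.mpr this
          _ = 4 * ((n / 2 : ℕ) : ℝ) := by push_cast; ring
      linarith
    calc ((n:ℝ) * f n) / 4 = f n * ((n:ℝ) / 4) := by ring
      _ ≤ f n * ((n / 2 : ℕ) : ℝ) := by
          apply mul_le_mul_of_nonneg_left hcast (hf0 n)
  have hX : Tendsto X atTop atTop := by
    apply tendsto_atTop.mpr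
    intro b
    filter_upwards [tendsto_atTop.mp hA b, tendsto_atTop.mp hB' b] with n h1 h2
    rw [hXdef]
    simp only []
    rcases le_total ((1:ℝ)/8) (f n) with h | h
    · rw [min_eq_left h]; exact h1
    · rw [min_eq_right h]; exact h2
  have hexpX : Tendsto (fun n : ℕ => Real.exp (-(X n))) atTop (nhds 0) :=
    Real.tendsto_exp_atBot.comp (tendsto_neg_atBot_iff.mpr hX)
  have hCto0 : Tendsto C atTop (nhds 0) :=
    tendsto_of_tendsto_of_tendsto_of_le_of_le tendsto_const_nhds hexpX hC0 hC_le
  -- eventual bound on B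
  have hev : ∀ᶠ n : ℕ in atTop, B n ≤ 32 * C n := by
    have hsmall : ∀ᶠ n : ℕ in atTop, C n < 1/16 := by
      have : (0:ℝ) < 1/16 := by norm_num
      exact hCto0.eventually_lt_const this
    filter_upwards [hsmall] with n hn
    apply bad_le (p n) (f n) (hp' n) (hf0 n) (hf2 n) (hG_all (p n))
    · have hn' : (max ((7:ℝ)/8) (1 - f n)) ^ (n/2) < 1/16 := hn
      linarith
    · intro σ hσ
      exact (Finset.mem_filter.mp hσ).2
  have hBto0 : Tendsto B atTop (nhds 0) := by
    have h32 : Tendsto (fun n : ℕ => 32 * C n) atTop (nhds 0) := by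
      simpa using hCto0.const_mul 32
    exact tendsto_of_tendsto_of_tendsto_of_le_of_le' tendsto_const_nhds h32
      (Filter.Eventually.of_forall hB0) hev
  have hfinal : Tendsto (fun n : ℕ => 1 - B n) atTop (nhds 1) := by
    have := tendsto_const_nhds (x := (1:ℝ)) (f := atTop (α := ℕ)) |>.sub hBto0
    simpa using this
  apply hfinal.congr
  intro n
  exact (hPr n).symm
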